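/- For every A ∈ M_n(F_{q^s}), the rank of φ̄(A) as a matrix over F_q equals s times the rank of A as a matrix over F_{q^s}, and equals the rank of ψ(A) = A ⊕ A^σ ⊕ ⋯ ⊕ A^{σ^{s−1}} as a matrix over F_{q^s}. Consequently, for any F_q-subspace C of M_n(F_{q^s}), the multiset { s·rank(x) : x ∈ C } equals the multiset { rank(φ̄(x)) : x ∈ C } and equals the multiset { rank(ψ(x)) : x ∈ C }. -/

import Mathlib

open Module

section Aux

lemma aux_rank_map_ringEquiv {K : Type*} [Field K] {m n : Type*} [Fintype m] [Fintype n]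
    (A : Matrix m n K) (e : K ≃+* K) : (A.map e).rank = A.rank := by
  classical
  have key : ∀ (w : n → K), (A.map e).mulVec (fun j => e (w j)) = fun i => e (A.mulVec w i) := by
    intro w
    funext i
    simp [Matrix.mulVec, Matrix.map, dotProduct, map_sum]
  have mem_iff : ∀ w : m → K, w ∈ LinearMap.range A.mulVecLin ↔
      (fun i => e (w i)) ∈ LinearMap.range (A.map e).mulVecLin := by
    intro w
    constructor
    · rintro ⟨v, rfl⟩
      exact ⟨fun j => e (v j), by rw [Matrix.mulVecLin_apply, key]; rfl⟩
    · rintro ⟨v, hv⟩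
      refine ⟨fun j => e.symm (v j), ?_⟩
      rw [Matrix.mulVecLin_apply] at hv ⊢
      funext i
      have hvi := congrFun hv i
      apply e.injective
      rw [← hvi]
      simp [Matrix.mulVec, Matrix.map, dotProduct, map_sum]
  let j : ↥(LinearMap.range A.mulVecLin) ≃+ ↥(LinearMap.range (A.map e).mulVecLin) :=
  { toFun := fun x => ⟨fun i => e (x.1 i), (mem_iff _).mp x.2⟩
    invFun := fun y => ⟨fun i => e.symm (y.1 i),
      (mem_iff _).mpr (by simp only [RingEquiv.apply_symm_apply]; exact y.2)⟩
    left_inv := fun x => by ext i; simp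
    right_inv := fun y => by ext i; simp
    map_add' := fun x y => by ext i; simp }
  have hrank : Module.rank K ↥(LinearMap.range A.mulVecLin)
      = Module.rank K ↥(LinearMap.range (A.map e).mulVecLin) := by
    refine rank_eq_of_equiv_equiv (e : ZeroHom K K) j e.bijective ?_
    intro r x
    refine Subtype.ext (funext fun i => ?_)
    show e (r * x.1 i) = e r * e (x.1 i)
    rw [map_mul]
  rw [Matrix.rank, Matrix.rank, Module.finrank, Module.finrank, hrank]

lemma aux_finrank_pi {K ι : Type*} [Field K] [Fintype ι] {φ : ι → Type*}
    [∀ i, AddCommGroup (φ i)] [∀ i, Module K (φ i)] [∀ i, FiniteDimensional K (φ i)]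
    (p : ∀ i, Submodule K (φ i)) :
    finrank K ↥(Submodule.pi Set.univ p) = ∑ i, finrank K ↥(p i) := by
  classical
  let e : ↥(Submodule.pi Set.univ p) ≃ₗ[K] ∀ i, ↥(p i) :=
  { toFun := fun x i => ⟨x.1 i, x.2 i (Set.mem_univ i)⟩
    invFun := fun f => ⟨fun i => (f i).1, fun i _ => (f i).2⟩
    left_inv := fun x => by ext i; rfl
    right_inv := fun f => by ext i; rfl
    map_add' := fun x y => by ext i; rfl
    map_smul' := fun c x => by ext i; rfl }
  rw [e.finrank_eq, Module.finrank_pi_fintype]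

lemma aux_rank_blockDiagonal {K m ι : Type*} [Field K] [Fintype m] [Fintype ι]
    [DecidableEq m] [DecidableEq ι] (M : ι → Matrix m m K) :
    (Matrix.blockDiagonal M).rank = ∑ u, (M u).rank := by
  classical
  let E : ((m × ι) → K) ≃ₗ[K] ∀ _ : ι, m → K :=
  { toFun := fun v u i => v (i, u)
    invFun := fun f p => f p.2 p.1
    left_inv := fun v => rfl
    right_inv := fun f => rfl
    map_add' := fun v w => rfl
    map_smul' := fun c v => rfl }
  have hmv : ∀ (v : (m × ι) → K) (i : m) (u : ι),
      (Matrix.blockDiagonal M).mulVec v (i, u) = (M u).mulVec (fun j => v (j, u)) i := by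
    intro v i u
    rw [Matrix.mulVec, dotProduct, Fintype.sum_prod_type]
    simp only [Matrix.blockDiagonal_apply]
    rw [Matrix.mulVec, dotProduct]
    refine Finset.sum_congr rfl fun j _ => ?_
    rw [Finset.sum_eq_single u]
    · simp
    · intro t _ ht; simp [ht.symm]
    · intro h; exact absurd (Finset.mem_univ u) h
  have hmap : Submodule.map (E : ((m × ι) → K) →ₗ[K] _)
      (LinearMap.range (Matrix.blockDiagonal M).mulVecLin)
      = Submodule.pi Set.univ (fun u => LinearMap.range (M u).mulVecLin) := by
    ext x
    simp only [Submodule.mem_map, LinearMap.mem_range, Submodule.mem_pi, Set.mem_univ,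
      forall_true_left]
    constructor
    · rintro ⟨y, ⟨v, rfl⟩, rfl⟩
      intro u
      exact ⟨fun j => v (j, u), by funext i; exact (hmv v i u).symm⟩
    · intro h
      choose w hw using h
      refine ⟨fun p => x p.2 p.1, ⟨fun p => w p.2 p.1, ?_⟩, rfl⟩
      funext p
      obtain ⟨i, u⟩ := p
      rw [Matrix.mulVecLin_apply, hmv, ← hw u, Matrix.mulVecLin_apply]
  have : (Matrix.blockDiagonal M).rank
      = finrank K ↥(Submodule.pi Set.univ (fun u => LinearMap.range (M u).mulVecLin)) := by
    rw [Matrix.rank, ← hmap, LinearEquiv.finrank_map_eq E]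
  rw [this, aux_finrank_pi]
  rfl

end Aux

/-- The regular representation `φ : F_{q^s} → M_s(F_q)` with respect to an
`F_q`-basis `b` of `F_{q^s}`. -/
noncomputable def phi {K L : Type*} [Field K] [Field L] [Algebra K L] {s : ℕ}
    (b : Basis (Fin s) K L) (α : L) : Matrix (Fin s) (Fin s) K :=
  LinearMap.toMatrix b b (LinearMap.mulLeft K α)

/-- `φ̄ : Mₙ(F_{q^s}) → M_{ns}(F_q)` sends `A = (a_{ij})` to the `n × n` block
matrix whose `(i,j)` block is `φ(a_{ij})`. -/
noncomputable def phibar {K L : Type*} [Field K] [Field L] [Algebra K L] {s n : ℕ}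
    (b : Basis (Fin s) K L) (A : Matrix (Fin n) (Fin n) L) :
    Matrix (Fin n × Fin s) (Fin n × Fin s) K :=
  fun p r => phi b (A p.1 r.1) p.2 r.2

/-- `ψ : Mₙ(F_{q^s}) → M_{ns}(F_{q^s})`, `ψ(A) = A ⊕ A^σ ⊕ ⋯ ⊕ A^{σ^{s−1}}`. -/
def psi {L : Type*} [Field L] (q s n : ℕ) (A : Matrix (Fin n) (Fin n) L) :
    Matrix (Fin n × Fin s) (Fin n × Fin s) L :=
  Matrix.blockDiagonal fun u : Fin s => A.map fun x => x ^ q ^ (u : ℕ)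

lemma aux_rank_phibar {K L : Type*} [Field K] [Field L] [Algebra K L] {s n : ℕ}
    (b : Basis (Fin s) K L) (A : Matrix (Fin n) (Fin n) L) :
    (phibar b A).rank = s * A.rank := by
  classical
  let B : Basis (Fin n × Fin s) K (Fin n → L) :=
    (b.smulTower (Pi.basisFun L (Fin n))).reindex (Equiv.prodComm (Fin s) (Fin n))
  have hB : phibar b A
      = LinearMap.toMatrix B B ((A.mulVecLin).restrictScalars K) := by
    ext ⟨p1, p2⟩ ⟨r1, r2⟩
    rw [LinearMap.toMatrix_apply]
    have hBr : B (r1, r2) = b r2 • Pi.basisFun L (Fin n) r1 := by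
      simp [B, Basis.reindex_apply]
    rw [hBr]
    have : ((A.mulVecLin).restrictScalars K) (b r2 • Pi.basisFun L (Fin n) r1)
        = b r2 • A.mulVec (Pi.single r1 1) := by
      simp [Matrix.mulVecLin_apply]
    rw [this]
    have hrepr : ∀ x : Fin n → L, B.repr x (p1, p2) = b.repr (x p1) p2 := by
      intro x
      show ((b.smulTower (Pi.basisFun L (Fin n))).reindex
        (Equiv.prodComm (Fin s) (Fin n))).repr x (p1, p2) = _
      rw [Basis.repr_reindex_apply, Basis.smulTower_repr]
      simp
    rw [hrepr]
    have : (b r2 • A.mulVec (Pi.single r1 1)) p1 = b r2 * A p1 r1 := by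
      simp [Matrix.mulVec_single]
    rw [this]
    rw [phibar, phi, LinearMap.toMatrix_apply, LinearMap.mulLeft_apply, mul_comm]
  rw [hB, Matrix.rank_eq_finrank_range_toLin _ B B, Matrix.toLin_toMatrix]
  have hr : LinearMap.range ((A.mulVecLin).restrictScalars K)
      = (LinearMap.range A.mulVecLin).restrictScalars K := by
    ext x
    simp [LinearMap.mem_range]
  rw [hr]
  have h1 : finrank K ↥((LinearMap.range A.mulVecLin).restrictScalars K)
      = finrank K L * finrank L ↥(LinearMap.range A.mulVecLin) := by
    rw [Module.finrank_mul_finrank K L ↥(LinearMap.range A.mulVecLin)]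
    exact LinearEquiv.finrank_eq ((Submodule.restrictScalarsEquiv (R := L) (S := K)
      (M := Fin n → L) (LinearMap.range A.mulVecLin)).restrictScalars K)
  rw [h1, finrank_eq_card_basis b, Fintype.card_fin]
  rfl

/-- For every `A ∈ Mₙ(F_{q^s})` the rank of `φ̄(A)` over `F_q`
equals `s` times the rank of `A` over `F_{q^s}`, and equals the rank of
`ψ(A) = A ⊕ A^σ ⊕ ⋯ ⊕ A^{σ^{s−1}}` over `F_{q^s}`.  Consequently, for any
`F_q`-subspace `C` of `Mₙ(F_{q^s})`, the multisets `{ s·rank(x) : x ∈ C }`,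
`{ rank(φ̄(x)) : x ∈ C }` and `{ rank(ψ(x)) : x ∈ C }` coincide. -/
theorem rank_phibar_eq_s_mul_rank (q s n : ℕ) (hq : IsPrimePow q) (hs : 1 ≤ s)
    (hn : 1 ≤ n) (K L : Type*) [Field K] [Fintype K] [Field L] [Fintype L]
    [Algebra K L] (hKcard : Fintype.card K = q) (hLcard : Fintype.card L = q ^ s)
    (b : Basis (Fin s) K L) :
    (∀ A : Matrix (Fin n) (Fin n) L,
        (phibar b A).rank = s * A.rank ∧ (psi q s n A).rank = s * A.rank) ∧
      ∀ (C : Submodule K (Matrix (Fin n) (Fin n) L)) (r : ℕ),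
        {x ∈ (C : Set (Matrix (Fin n) (Fin n) L)) | s * x.rank = r}.ncard =
            {x ∈ (C : Set (Matrix (Fin n) (Fin n) L)) | (phibar b x).rank = r}.ncard ∧
          {x ∈ (C : Set (Matrix (Fin n) (Fin n) L)) | s * x.rank = r}.ncard =
            {x ∈ (C : Set (Matrix (Fin n) (Fin n) L)) | (psi q s n x).rank = r}.ncard := by
  classical
  -- the Frobenius twists are ring equivalences
  have hFrob : ∀ u : ℕ, ∃ e : L ≃+* L, (fun x : L => x ^ q ^ u) = ⇑e := by
    obtain ⟨p, k, hp, hk, hq'⟩ := hq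
    have hpp : p.Prime := Nat.prime_iff.mpr hp
    obtain ⟨m, hm1, hm2⟩ := FiniteField.card K (ringChar K)
    have hpeq : p = ringChar K := by
      have h : p ^ k = ringChar K ^ (m : ℕ) := by rw [hq', ← hKcard, hm2]
      have : p ∣ ringChar K ^ (m : ℕ) := h ▸ dvd_pow_self p hk.ne'
      have := (Nat.Prime.dvd_of_dvd_pow hpp this)
      exact ((Nat.prime_dvd_prime_iff_eq hpp hm1).mp this)
    haveI : CharP K p := hpeq ▸ ringChar.charP K
    haveI : CharP L p := charP_of_injective_algebraMap (algebraMap K L).injective p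
    haveI : ExpChar L p := ExpChar.prime hpp
    intro u
    refine ⟨iterateFrobeniusEquiv L p (k * u), ?_⟩
    funext x
    rw [iterateFrobeniusEquiv_def, pow_mul, hq']
  have main : ∀ A : Matrix (Fin n) (Fin n) L,
      (phibar b A).rank = s * A.rank ∧ (psi q s n A).rank = s * A.rank := by
    intro A
    refine ⟨aux_rank_phibar b A, ?_⟩
    rw [psi, aux_rank_blockDiagonal]
    have : ∀ u : Fin s, (A.map fun x => x ^ q ^ (u : ℕ)).rank = A.rank := by
      intro u
      obtain ⟨e, he⟩ := hFrob (u : ℕ)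
      rw [he, aux_rank_map_ringEquiv]
    rw [Finset.sum_congr rfl fun u _ => this u]
    simp [mul_comm]
  refine ⟨main, fun C r => ?_⟩
  constructor
  · congr 1
    ext x
    simp only [Set.mem_setOf_eq, (main x).1, (main x).2]
  · congr 1
    ext x
    simp only [Set.mem_setOf_eq, (main x).1, (main x).2]
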